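/- Let μ₃⁻¹ denote the Dirichlet inverse of the rank-3 Möbius function μ₃. Then for every prime p and integer m ≥ 0, μ₃⁻¹(p^m) = 1 if m ≡ 0 or 1 (mod 6), μ₃⁻¹(p^m) = 0 if m ≡ 2 or 5 (mod 6), and μ₃⁻¹(p^m) = −1 if m ≡ 3 or 4 (mod 6). -/

import Mathlib

open scoped Classical

/-- The Möbius function of rank `r`:  `μ_r(n) = (-1)^Ω(n)` if `n` is `r`-free
(no prime `p` has `p^r ∣ n`), and `0` otherwise. -/
noncomputable def muR (r n : ℕ) : ℤ :=
  if ∀ p : ℕ, p.Prime → ¬ p ^ r ∣ n then (-1) ^ (ArithmeticFunction.cardFactors n) else 0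

lemma muR3_prime_pow {p : ℕ} (hp : p.Prime) (i : ℕ) :
    muR 3 (p ^ i) = if i = 0 then 1 else if i = 1 then -1 else if i = 2 then 1 else 0 := by
  unfold muR
  by_cases h : i ≤ 2
  · rw [if_pos, ArithmeticFunction.cardFactors_apply_prime_pow hp]
    · interval_cases i <;> norm_num
    · intro q hq hdvd
      have hqp : q = p := by
        have h1 : q ∣ p ^ i := dvd_trans (dvd_pow_self q (by norm_num)) hdvd
        exact (Nat.prime_dvd_prime_iff_eq hq hp).mp (hq.dvd_of_dvd_pow h1)
      subst hqp
      have := (Nat.pow_dvd_pow_iff_le_right hp.one_lt).mp hdvd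
      omega
  · have h3 : ¬ ∀ q : ℕ, q.Prime → ¬ q ^ 3 ∣ p ^ i := by
      push_neg
      exact ⟨p, hp, pow_dvd_pow p (by omega)⟩
    rw [if_neg h3]
    simp [show i ≠ 0 by omega, show i ≠ 1 by omega, show i ≠ 2 by omega]

/-- Values of the Dirichlet inverse `μ₃⁻¹` of the rank-3 Möbius function at
prime powers: `1` if `m ≡ 0, 1 (mod 6)`, `0` if `m ≡ 2, 5 (mod 6)`, and `-1` if
`m ≡ 3, 4 (mod 6)`.  The Dirichlet inverse is characterized by
`∑_{d ∣ n} μ₃(d)·g(n/d) = [n = 1]` for all `n ≥ 1`. -/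
theorem mu3_inv_prime_pow (g : ℕ → ℤ)
    (hg : ∀ n : ℕ, 0 < n →
      (∑ d ∈ n.divisors, muR 3 d * g (n / d)) = if n = 1 then 1 else 0)
    (p : ℕ) (hp : p.Prime) (m : ℕ) :
    g (p ^ m) =
      if m % 6 = 0 ∨ m % 6 = 1 then 1
      else if m % 6 = 2 ∨ m % 6 = 5 then 0
      else -1 := by
  set f : ℕ → ℤ := fun m =>
      if m % 6 = 0 ∨ m % 6 = 1 then 1
      else if m % 6 = 2 ∨ m % 6 = 5 then 0
      else -1 with hf
  show g (p ^ m) = f m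
  -- the key sum identity at p^k
  have key : ∀ k : ℕ, (∑ i ∈ Finset.range (k + 1), muR 3 (p ^ i) * g (p ^ (k - i)))
      = if k = 0 then 1 else 0 := by
    intro k
    have h1 := hg (p ^ k) (pow_pos hp.pos k)
    rw [Nat.sum_divisors_prime_pow hp] at h1
    have h2 : ∀ i ∈ Finset.range (k + 1), muR 3 (p ^ i) * g (p ^ k / p ^ i)
        = muR 3 (p ^ i) * g (p ^ (k - i)) := by
      intro i hi
      rw [Nat.pow_div (by simpa using Nat.lt_succ_iff.mp (Finset.mem_range.mp hi)) hp.pos]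
    rw [Finset.sum_congr rfl h2] at h1
    rw [h1]
    have hiff : (p ^ k = 1) ↔ (k = 0) := by
      constructor
      · intro h
        by_contra hk
        exact absurd h (Nat.one_lt_pow hk hp.one_lt).ne'
      · intro h
        simp [h]
    simp only [hiff]
  have hm0 : muR 3 1 = 1 := by simpa using muR3_prime_pow hp 0
  have hm1 : muR 3 p = -1 := by simpa using muR3_prime_pow hp 1
  have hg1 : g 1 = 1 := by
    have := key 0
    simpa [hm0] using this
  have hgp : g p = 1 := by
    have h := key 1
    rw [Finset.sum_range_succ, Finset.sum_range_succ] at h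
    simp [hm0, hm1, hg1] at h
    linarith
  have hrec : ∀ k : ℕ, g (p ^ (k + 2)) = g (p ^ (k + 1)) - g (p ^ k) := by
    intro k
    have h := key (k + 2)
    have hsplit : Finset.range (k + 3) = Finset.range 3 ∪ Finset.Ico 3 (k + 3) := by
      ext x
      simp [Finset.mem_union, Finset.mem_range, Finset.mem_Ico]
      omega
    rw [show k + 2 + 1 = k + 3 from rfl, hsplit, Finset.sum_union (by
      simp [Finset.disjoint_left, Finset.mem_range, Finset.mem_Ico]; omega)] at h
    have htail : (∑ i ∈ Finset.Ico 3 (k + 3), muR 3 (p ^ i) * g (p ^ (k + 2 - i))) = 0 := by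
      apply Finset.sum_eq_zero
      intro i hi
      have hi3 : 3 ≤ i := (Finset.mem_Ico.mp hi).1
      rw [muR3_prime_pow hp i]
      simp [show i ≠ 0 by omega, show i ≠ 1 by omega, show i ≠ 2 by omega]
    rw [htail, add_zero] at h
    rw [show (3 : ℕ) = 2 + 1 from rfl, Finset.sum_range_succ, Finset.sum_range_succ,
      Finset.sum_range_one] at h
    rw [muR3_prime_pow hp 0, muR3_prime_pow hp 1, muR3_prime_pow hp 2] at h
    norm_num at h
    linarith
  have main : ∀ k : ℕ, g (p ^ k) = f k ∧ g (p ^ (k + 1)) = f (k + 1) := by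
    intro k
    induction k with
    | zero =>
      constructor
      · simpa [hf] using hg1
      · simpa [hf] using hgp
    | succ n ih =>
      refine ⟨ih.2, ?_⟩
      rw [hrec n, ih.1, ih.2]
      have h6 : n % 6 = 0 ∨ n % 6 = 1 ∨ n % 6 = 2 ∨ n % 6 = 3 ∨ n % 6 = 4 ∨ n % 6 = 5 := by
        omega
      rcases h6 with h | h | h | h | h | h <;>
        simp [hf, h, Nat.add_mod, show (n+1) % 6 = (n % 6 + 1) % 6 from by omega,
          show (n+2) % 6 = (n % 6 + 2) % 6 from by omega]
  exact (main m).1
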